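/- 1/z-expansion of the small I-function of local P^2: Let F = ℚ(λ_0,λ_1,λ_2,H) and let w be a formal variable (playing the role of 1/z). For d ≥ 1 define c_d ∈ F[[w]] as the product c_d = [Π_{k=0}^{3d−1}(−3H − kw^{−1})·w^{3d}] · Π_{i=0}^{2} Π_{k=1}^{d}(k + (H−λ_i)w)^{−1}, i.e. the expansion at z = ∞ (w = 1/z) of the q^d-coefficient of the small I-function of local P^2. Then c_d has zero constant term in w, its coefficient of w^1 equals 3(−1)^d (3d−1)!/(d!)^3 · H, and its coefficient of w^2 equals (−1)^d · 3 (3d−1)!/(d!)^3 · [ (3·Har[3d−1] − 3·Har[d])·H^2 + Har[d]·s_1·H ], where Har[m] = Σ_{k=1}^{m} 1/k and s_1 = λ_0+λ_1+λ_2. Equivalently, the small I-function has the expansion 1 + I_1 H/z + (I_{2,0}H^2 + I_{2,1}s_1H)/z^2 + O(1/z^3) with I_1(q) = Σ_{d≥1} 3 (3d−1)!/(d!)^3 (−q)^d, I_{2,0}(q) = Σ_{d≥1} 3 (3d−1)!/(d!)^3 (3Har[3d−1] − 3Har[d]) (−q)^d, and I_{2,1}(q) = Σ_{d≥1} 3 (3d−1)!/(d!)^3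 Har[d] (−q)^d. -/

import Mathlib

/-!
STATEMENT 5: 1/z-expansion of the small I-function of local P².
F = ℚ(λ_0,λ_1,λ_2,H), w = 1/z, and for d ≥ 1
c_d = Π_{k=0}^{3d−1}(−3Hw − k) · Π_{i=0}^{2} Π_{k=1}^{d}(k + (H−λ_i)w)⁻¹ ∈ F[[w]]
(the expansion at z = ∞ of the q^d-coefficient of the small I-function).
Then c_d has zero constant term, its w¹-coefficient is 3(−1)^d (3d−1)!/(d!)³·H,
and its w²-coefficient is (−1)^d·3(3d−1)!/(d!)³·[(3Har[3d−1]−3Har[d])H² + Har[d]s₁H].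
-/

noncomputable section

/-- The rational function field `F = ℚ(λ_0,λ_1,λ_2,H)`. -/
abbrev F5 : Type := FractionRing (MvPolynomial (Fin 3 ⊕ Unit) ℚ)

/-- The indeterminate `λ_i`. -/
def lam (i : Fin 3) : F5 :=
  algebraMap (MvPolynomial (Fin 3 ⊕ Unit) ℚ) F5 (MvPolynomial.X (Sum.inl i))

/-- The indeterminate `H`. -/
def Hc : F5 :=
  algebraMap (MvPolynomial (Fin 3 ⊕ Unit) ℚ) F5 (MvPolynomial.X (Sum.inr ()))

/-- Harmonic number `Har[m] = Σ_{k=1}^m 1/k` in `F`. -/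
def Har (m : ℕ) : F5 := ∑ k ∈ Finset.range m, ((k : F5) + 1)⁻¹

/-- `c_d = Π_{k=0}^{3d−1}(−3Hw − k) · Π_{i=0}^{2} Π_{k=1}^{d}(k + (H−λ_i)w)⁻¹ ∈ F[[w]]`,
the expansion at `z = ∞` (`w = 1/z`) of the `q^d`-coefficient of the small
I-function of local P². -/
def cSeries (d : ℕ) : PowerSeries F5 :=
  (∏ k ∈ Finset.range (3 * d),
      (PowerSeries.C (-3 * Hc) * PowerSeries.X - (k : PowerSeries F5))) *
  (∏ i : Fin 3, ∏ k ∈ Finset.range d,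
      (((k : PowerSeries F5) + 1) + PowerSeries.C (Hc - lam i) * PowerSeries.X)⁻¹)

set_option maxHeartbeats 1000000

open PowerSeries Finset

lemma coeff_one_mul' (f g : PowerSeries F5) :
    (PowerSeries.coeff 1) (f * g) =
      (PowerSeries.constantCoeff) f * (PowerSeries.coeff 1) g
      + (PowerSeries.coeff 1) f * (PowerSeries.constantCoeff) g := by
  rw [PowerSeries.coeff_mul, Finset.Nat.sum_antidiagonal_eq_sum_range_succ_mk]
  simp [Finset.sum_range_succ, PowerSeries.coeff_zero_eq_constantCoeff]

lemma coeff_two_mul' (f g : PowerSeries F5) :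
    (PowerSeries.coeff 2) (f * g) =
      (PowerSeries.constantCoeff) f * (PowerSeries.coeff 2) g
      + (PowerSeries.coeff 1) f * (PowerSeries.coeff 1) g
      + (PowerSeries.coeff 2) f * (PowerSeries.constantCoeff) g := by
  rw [PowerSeries.coeff_mul, Finset.Nat.sum_antidiagonal_eq_sum_range_succ_mk]
  simp [Finset.sum_range_succ, PowerSeries.coeff_zero_eq_constantCoeff]

lemma prod_one_add' {ι : Type*} (s : Finset ι) (r : ι → F5) :
    (PowerSeries.constantCoeff) (∏ j ∈ s, (1 + PowerSeries.C (r j) * PowerSeries.X)) = 1 ∧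
    (PowerSeries.coeff 1) (∏ j ∈ s, (1 + PowerSeries.C (r j) * PowerSeries.X))
      = ∑ j ∈ s, r j := by
  induction s using Finset.cons_induction with
  | empty => simp
  | cons a s ha ih =>
    rw [Finset.prod_cons, Finset.sum_cons]
    refine ⟨?_, ?_⟩
    · rw [map_mul, ih.1]; simp
    · rw [coeff_one_mul', ih.1, ih.2]; simp [add_comm]

lemma hfac (a b : F5) (ha : a ≠ 0) :
    PowerSeries.C a + PowerSeries.C b * PowerSeries.X
      = PowerSeries.C a * (1 + PowerSeries.C (b / a) * PowerSeries.X) := by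
  rw [mul_add, mul_one, ← mul_assoc, ← map_mul]
  congr 2
  field_simp

lemma prod_cast_factorial (n : ℕ) :
    ∏ k ∈ Finset.range n, ((k : F5) + 1) = (n.factorial : F5) := by
  induction n with
  | zero => simp
  | succ n ih => rw [Finset.prod_range_succ, ih, Nat.factorial_succ]; push_cast; ring

lemma prod_neg_cast_factorial (n : ℕ) :
    ∏ k ∈ Finset.range n, (-((k : F5) + 1)) = (-1 : F5) ^ n * (n.factorial : F5) := by
  induction n with
  | zero => simp
  | succ n ih => rw [Finset.prod_range_succ, ih, Nat.factorial_succ, pow_succ]; push_cast; ring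

theorem stmt5 (d : ℕ) (hd : 1 ≤ d) :
    PowerSeries.constantCoeff (cSeries d) = 0 ∧
    PowerSeries.coeff 1 (cSeries d) =
      3 * (-1 : F5) ^ d * ((3 * d - 1).factorial : F5) / ((d.factorial : F5)) ^ 3 * Hc ∧
    PowerSeries.coeff 2 (cSeries d) =
      (-1 : F5) ^ d * 3 * ((3 * d - 1).factorial : F5) / ((d.factorial : F5)) ^ 3 *
        ((3 * Har (3 * d - 1) - 3 * Har d) * Hc ^ 2
          + Har d * (lam 0 + lam 1 + lam 2) * Hc) := by
  classical
  set P : PowerSeries F5 := ∏ i : Fin 3, ∏ k ∈ Finset.range d,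
      (((k : PowerSeries F5) + 1) + PowerSeries.C (Hc - lam i) * PowerSeries.X) with hP
  set N : PowerSeries F5 := ∏ k ∈ Finset.range (3 * d),
      (PowerSeries.C (-3 * Hc) * PowerSeries.X - (k : PowerSeries F5)) with hN
  have hk1 : ∀ k : ℕ, ((k : F5) + 1) ≠ 0 := fun k => Nat.cast_add_one_ne_zero k
  -- key identity
  have hunit : ∀ (i : Fin 3) (k : ℕ),
      ((((k : PowerSeries F5) + 1) + PowerSeries.C (Hc - lam i) * PowerSeries.X)⁻¹ *
        (((k : PowerSeries F5) + 1) + PowerSeries.C (Hc - lam i) * PowerSeries.X)) = 1 := by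
    intro i k
    apply PowerSeries.inv_mul_cancel
    simp [hk1 k]
  have key : cSeries d * P = N := by
    rw [cSeries, hP, mul_assoc]
    rw [← Finset.prod_mul_distrib]
    conv_lhs =>
      rw [Finset.prod_congr rfl (fun i _ => (Finset.prod_mul_distrib).symm)]
      rw [Finset.prod_congr rfl (fun i _ =>
        Finset.prod_congr rfl (fun k _ => hunit i k))]
    simp only [Finset.prod_const_one, mul_one]
    rfl
  -- rewrite factor forms
  have hcast : ∀ k : ℕ, ((k : PowerSeries F5) + 1) = PowerSeries.C ((k : F5) + 1) := by
    intro k; rw [map_add, map_one, map_natCast]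
  -- P in normalized form
  set gP : PowerSeries F5 := ∏ p ∈ (Finset.univ ×ˢ Finset.range d : Finset (Fin 3 × ℕ)),
      (1 + PowerSeries.C ((Hc - lam p.1) / ((p.2 : F5) + 1)) * PowerSeries.X) with hgP
  have hPeq : P = PowerSeries.C ((d.factorial : F5) ^ 3) * gP := by
    rw [hP, hgP, ← Finset.prod_product']
    rw [Finset.prod_congr rfl (fun p _ => by
      rw [hcast p.2, hfac _ _ (hk1 p.2)])]
    rw [Finset.prod_mul_distrib, ← map_prod]
    congr 1
    rw [Finset.prod_product' (f := fun (_ : Fin 3) (k : ℕ) => ((k : F5) + 1))]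
    simp only [prod_cast_factorial]
    rw [Finset.prod_const, Finset.card_univ]
    simp
  obtain ⟨hgP0, hgP1⟩ := prod_one_add' (Finset.univ ×ˢ Finset.range d)
      (fun p : Fin 3 × ℕ => (Hc - lam p.1) / ((p.2 : F5) + 1))
  -- N in normalized form
  have h3d : 3 * d = (3 * d - 1) + 1 := by omega
  set gN : PowerSeries F5 := ∏ k ∈ Finset.range (3 * d - 1),
      (1 + PowerSeries.C (3 * Hc / ((k : F5) + 1)) * PowerSeries.X) with hgN
  set cN : F5 := (-1 : F5) ^ (3 * d - 1) * ((3 * d - 1).factorial : F5) * (-3 * Hc) with hcN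
  have hNeq : N = PowerSeries.C cN * (gN * PowerSeries.X) := by
    rw [hN, show Finset.range (3 * d) = Finset.range ((3 * d - 1) + 1) from by rw [← h3d],
      Finset.prod_range_succ']
    have hf0 : PowerSeries.C (-3 * Hc) * PowerSeries.X - ((0 : ℕ) : PowerSeries F5)
        = PowerSeries.C (-3 * Hc) * PowerSeries.X := by rw [Nat.cast_zero, sub_zero]
    rw [hf0]
    have hfk : ∀ k : ℕ, PowerSeries.C (-3 * Hc) * PowerSeries.X - (((k+1) : ℕ) : PowerSeries F5)
        = PowerSeries.C (-((k : F5) + 1)) *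
          (1 + PowerSeries.C (3 * Hc / ((k : F5) + 1)) * PowerSeries.X) := by
      intro k
      have hdiv : 3 * Hc / ((k : F5) + 1) = (-3 * Hc) / (-((k : F5) + 1)) := by
        rw [div_neg]; ring
      rw [hdiv, ← hfac _ _ (neg_ne_zero.mpr (hk1 k)), map_neg, ← hcast k]
      push_cast
      ring
    rw [Finset.prod_congr rfl (fun k _ => hfk k), Finset.prod_mul_distrib, ← map_prod,
      prod_neg_cast_factorial, hgN, hcN]
    rw [map_mul, mul_mul_mul_comm]
    rw [← map_mul, ← map_mul]
  obtain ⟨hgN0, hgN1⟩ := prod_one_add' (Finset.range (3 * d - 1))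
      (fun k : ℕ => 3 * Hc / ((k : F5) + 1))
  -- coefficients of P
  have hfacne : ((d.factorial : F5)) ^ 3 ≠ 0 :=
    pow_ne_zero _ (Nat.cast_ne_zero.mpr d.factorial_ne_zero)
  have hP0 : PowerSeries.constantCoeff P = (d.factorial : F5) ^ 3 := by
    rw [hPeq, map_mul, PowerSeries.constantCoeff_C, hgP0, mul_one]
  have hsum : ∑ p ∈ (Finset.univ ×ˢ Finset.range d : Finset (Fin 3 × ℕ)),
      (Hc - lam p.1) / ((p.2 : F5) + 1)
      = (3 * Hc - (lam 0 + lam 1 + lam 2)) * Har d := by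
    rw [Finset.sum_product]
    have : ∀ i : Fin 3, ∑ k ∈ Finset.range d, (Hc - lam i) / ((k : F5) + 1)
        = (Hc - lam i) * Har d := by
      intro i
      rw [Har, Finset.mul_sum]
      exact Finset.sum_congr rfl (fun k _ => div_eq_mul_inv _ _)
    rw [Finset.sum_congr rfl (fun i _ => this i), Fin.sum_univ_three]
    ring
  have hP1 : PowerSeries.coeff 1 P
      = (d.factorial : F5) ^ 3 * ((3 * Hc - (lam 0 + lam 1 + lam 2)) * Har d) := by
    rw [hPeq, PowerSeries.coeff_C_mul, hgP1, hsum]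
  -- coefficients of N
  have hN0 : PowerSeries.constantCoeff N = 0 := by
    rw [hNeq, map_mul, map_mul]
    simp
  have hN1 : PowerSeries.coeff 1 N = cN := by
    rw [hNeq, PowerSeries.coeff_C_mul]
    rw [show (1 : ℕ) = 0 + 1 from rfl, PowerSeries.coeff_succ_mul_X,
      PowerSeries.coeff_zero_eq_constantCoeff, hgN0, mul_one]
  have hsumN : ∑ k ∈ Finset.range (3 * d - 1), 3 * Hc / ((k : F5) + 1)
      = 3 * Hc * Har (3 * d - 1) := by
    rw [Har, Finset.mul_sum]
    exact Finset.sum_congr rfl (fun k _ => div_eq_mul_inv _ _)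
  have hN2 : PowerSeries.coeff 2 N = cN * (3 * Hc * Har (3 * d - 1)) := by
    rw [hNeq, PowerSeries.coeff_C_mul,
      PowerSeries.coeff_succ_mul_X, hgN1, hsumN]
  -- sign
  have hsign : (-1 : F5) ^ (3 * d - 1) = -(-1 : F5) ^ d := by
    rcases Nat.even_or_odd d with h | h
    ·  have h0 := Nat.even_iff.mp h
       have h2 : Odd (3 * d - 1) := Nat.odd_iff.mpr (by omega)
       rw [h2.neg_one_pow, h.neg_one_pow]
    ·  have h0 := Nat.odd_iff.mp h
       have h2 : Even (3 * d - 1) := Nat.even_iff.mpr (by omega)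
       rw [h2.neg_one_pow, h.neg_one_pow]
       norm_num
  -- extract coefficients of cSeries
  have hc0 : PowerSeries.constantCoeff (cSeries d) = 0 := by
    have := congrArg (PowerSeries.constantCoeff) key
    rw [map_mul, hP0, hN0] at this
    exact (mul_eq_zero.mp this).resolve_right hfacne
  have hc1 : PowerSeries.coeff 1 (cSeries d) =
      3 * (-1 : F5) ^ d * ((3 * d - 1).factorial : F5) / ((d.factorial : F5)) ^ 3 * Hc := by
    have := congrArg (PowerSeries.coeff 1) key
    rw [coeff_one_mul', hc0, hN1, hP0, zero_mul, zero_add] at this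
    have hf1 : (d.factorial : F5) ≠ 0 := Nat.cast_ne_zero.mpr d.factorial_ne_zero
    field_simp at this ⊢
    rw [hcN, hsign] at this
    linear_combination this
  refine ⟨hc0, hc1, ?_⟩
  have := congrArg (PowerSeries.coeff 2) key
  rw [coeff_two_mul', hc0, hc1, hN2, hP0, hP1, zero_mul, zero_add] at this
  have hc2v : PowerSeries.coeff 2 (cSeries d) =
      (cN * (3 * Hc * Har (3 * d - 1))
        - (3 * (-1 : F5) ^ d * ((3 * d - 1).factorial : F5) / ((d.factorial : F5)) ^ 3 * Hc)
          * ((d.factorial : F5) ^ 3 * ((3 * Hc - (lam 0 + lam 1 + lam 2)) * Har d)))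
        / (d.factorial : F5) ^ 3 := by
    rw [eq_div_iff hfacne]
    linear_combination this
  rw [hc2v, hcN, hsign]
  have hf1 : (d.factorial : F5) ≠ 0 := Nat.cast_ne_zero.mpr d.factorial_ne_zero
  field_simp
  ring

end
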